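/- arXiv:2603.26222 — 3 statements merged into one kernel-verified Lean document; each statement's English description precedes it below -/
import Mathlib

section
/- If a right functional R-module X = (X, X', g) satisfies condition (FS), then the ring homomorphism j : K_R(X) → L_R(X) sending x ⊗ φ to the operator θ_{x,φ} : y ↦ x·g(φ⊗y) is injective, and its image is a two-sided ideal of the ring L_R(X) of adjointable operators. -/
/-- A right functional `R`-module `(X, X', g)`: `X` a right `R`-module, `X'` a left
`R`-module (over a possibly non-unital ring `R`), and `g : X' ⊗_ℤ X → R` an
`R`-bimodule map, encoded here as a biadditive map `g : X' → X → R`. -/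
structure FnMod (R X X' : Type) [NonUnitalRing R] [AddCommGroup X] [AddCommGroup X'] where
  sm : X → R → X
  sm' : R → X' → X'
  g : X' → X → R
  sm_add_left : ∀ x y r, sm (x + y) r = sm x r + sm y r
  sm_add_right : ∀ x r s, sm x (r + s) = sm x r + sm x s
  sm_mul : ∀ x r s, sm x (r * s) = sm (sm x r) s
  sm'_add_left : ∀ r φ ψ, sm' r (φ + ψ) = sm' r φ + sm' r ψ
  sm'_add_right : ∀ r s φ, sm' (r + s) φ = sm' r φ + sm' s φ
  sm'_mul : ∀ r s φ, sm' (r * s) φ = sm' r (sm' s φ)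
  g_add_left : ∀ φ ψ x, g (φ + ψ) x = g φ x + g ψ x
  g_add_right : ∀ φ x y, g φ (x + y) = g φ x + g φ y
  g_sm' : ∀ r φ x, g (sm' r φ) x = r * g φ x
  g_sm : ∀ φ x r, g φ (sm x r) = g φ x * r

namespace FnMod
variable {R X X' : Type} [NonUnitalRing R] [AddCommGroup X] [AddCommGroup X']

/-- `f : X → X` is additive and right `R`-linear. -/
def RLinear (M : FnMod R X X') (f : X → X) : Prop :=
  (∀ x y, f (x + y) = f x + f y) ∧ ∀ x r, f (M.sm x r) = M.sm (f x) r

/-- `f : X' → X'` is additive and left `R`-linear. -/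
def RLinear' (M : FnMod R X X') (f : X' → X') : Prop :=
  (∀ φ ψ, f (φ + ψ) = f φ + f ψ) ∧ ∀ r φ, f (M.sm' r φ) = M.sm' r (f φ)

/-- `fs` is an adjoint of `f`: `g(φ ⊗ f x) = g(fs φ ⊗ x)`. -/
def IsAdjoint (M : FnMod R X X') (f : X → X) (fs : X' → X') : Prop :=
  ∀ φ x, M.g φ (f x) = M.g (fs φ) x

/-- `f` is an adjointable endomorphism of the functional module. -/
def Adjointable (M : FnMod R X X') (f : X → X) : Prop :=
  M.RLinear f ∧ ∃ fs, M.RLinear' fs ∧ M.IsAdjoint f fs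

/-- Non-degeneracy of the scalar product. -/
def Nondeg (M : FnMod R X X') : Prop :=
  (∀ x, (∀ φ, M.g φ x = 0) → x = 0) ∧ ∀ φ, (∀ x, M.g φ x = 0) → φ = 0

/-- Condition (FS): finite families of vectors (resp. functionals) admit a compact
operator `Θ₁ = Σⱼ yⱼ ⊗ ψⱼ` (resp. `Θ₂ = Σⱼ zⱼ ⊗ χⱼ`) acting as the identity on them. -/
def FS (M : FnMod R X X') : Prop :=
  ∀ (n : ℕ) (x : Fin n → X) (φ : Fin n → X'),
    ∃ (m₁ : ℕ) (y : Fin m₁ → X) (ψ : Fin m₁ → X') (m₂ : ℕ) (z : Fin m₂ → X) (χ : Fin m₂ → X'),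
      (∀ i, ∑ j, M.sm (y j) (M.g (ψ j) (x i)) = x i) ∧
      (∀ i, ∑ j, M.sm' (M.g (φ i) (z j)) (χ j) = φ i)

/-- The rank-one operator `θ_{x,φ} : y ↦ x · g(φ ⊗ y)`. -/
def theta (M : FnMod R X X') (x : X) (φ : X') : X → X := fun y => M.sm x (M.g φ y)

end FnMod
noncomputable section

open scoped TensorProduct

/-- The subgroup of `A ⊗_ℤ B` generated by the balancing relations
`(a·r) ⊗ b − a ⊗ (r·b)` for a right action `ra` on `A` and left action `lb` on `B`. -/
def BalRel (R A B : Type) [NonUnitalRing R] [AddCommGroup A] [AddCommGroup B]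
    (ra : A → R → A) (lb : R → B → B) : AddSubgroup (TensorProduct ℤ A B) :=
  AddSubgroup.closure {z | ∃ (a : A) (r : R) (b : B), z = (ra a r) ⊗ₜ[ℤ] b - a ⊗ₜ[ℤ] (lb r b)}

/-- The balanced tensor product `A ⊗_R B` over the (possibly non-unital) ring `R`. -/
def TensB (R A B : Type) [NonUnitalRing R] [AddCommGroup A] [AddCommGroup B]
    (ra : A → R → A) (lb : R → B → B) : Type :=
  TensorProduct ℤ A B ⧸ BalRel R A B ra lb

instance TensB.instAddCommGroup (R A B : Type) [NonUnitalRing R] [AddCommGroup A]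
    [AddCommGroup B] (ra : A → R → A) (lb : R → B → B) :
    AddCommGroup (TensB R A B ra lb) := by
  delta TensB; infer_instance

/-- The class of the pure tensor `a ⊗ b` in `A ⊗_R B`. -/
def TensB.mk {R A B : Type} [NonUnitalRing R] [AddCommGroup A] [AddCommGroup B]
    (ra : A → R → A) (lb : R → B → B) (a : A) (b : B) : TensB R A B ra lb :=
  QuotientAddGroup.mk (a ⊗ₜ[ℤ] b)

namespace FnMod
variable {R X X' : Type} [NonUnitalRing R] [AddCommGroup X] [AddCommGroup X']

/-- The abelian group `K_R(X) = X ⊗_R X'` of "compact operators". -/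
def K (M : FnMod R X X') : Type := TensB R X X' M.sm M.sm'

instance (M : FnMod R X X') : AddCommGroup M.K := by delta K; infer_instance

/-- The class of `x ⊗ φ` in `K_R(X)`. -/
def kTen (M : FnMod R X X') (x : X) (φ : X') : M.K := TensB.mk M.sm M.sm' x φ

end FnMod

namespace Stmt4Aux

variable {R X X' : Type} [NonUnitalRing R] [AddCommGroup X] [AddCommGroup X']
variable (M : FnMod R X X')

lemma sm_zero (r : R) : M.sm 0 r = 0 := by
  have h := M.sm_add_left 0 0 r
  rw [add_zero] at h
  exact (left_eq_add.mp h)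

lemma sm'_zero (r : R) : M.sm' r 0 = 0 := by
  have h := M.sm'_add_left r 0 0
  rw [add_zero] at h
  exact (left_eq_add.mp h)

lemma g_zero_left (x : X) : M.g 0 x = 0 := by
  have h := M.g_add_left 0 0 x
  rw [add_zero] at h
  exact (left_eq_add.mp h)

lemma g_zero_right (φ : X') : M.g φ 0 = 0 := by
  have h := M.g_add_right φ 0 0
  rw [add_zero] at h
  exact (left_eq_add.mp h)

/-- `θ_{x,φ}` as an additive map. -/
def thetaA (x : X) (φ : X') : X →+ X :=
  AddMonoidHom.mk' (M.theta x φ) fun y z => by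
    simp [FnMod.theta, M.g_add_right, M.sm_add_right]

/-- The biadditive map `x ↦ φ ↦ θ_{x,φ}`. -/
def thetaAA : X →+ X' →+ (X →+ X) :=
  AddMonoidHom.mk'
    (fun x => AddMonoidHom.mk' (fun φ => thetaA M x φ)
      (fun φ ψ => by
        ext y
        show M.theta x (φ + ψ) y = M.theta x φ y + M.theta x ψ y
        simp [thetaA, FnMod.theta, M.g_add_left, M.sm_add_right]))
    (fun x y => by
      ext φ z
      show M.theta (x + y) φ z = M.theta x φ z + M.theta y φ z
      simp [thetaA, FnMod.theta, M.sm_add_left])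

/-- The lift of `thetaAA` to the ℤ-tensor product. -/
def Phi : TensorProduct ℤ X X' →+ (X →+ X) :=
  TensorProduct.liftAddHom (thetaAA M) (fun c x φ => by
    rw [map_zsmul, map_zsmul]
    rfl)

lemma Phi_ker : BalRel R X X' M.sm M.sm' ≤ (Phi M).ker := by
  rw [BalRel]
  rw [AddSubgroup.closure_le]
  rintro z ⟨a, r, b, rfl⟩
  simp only [SetLike.mem_coe, AddMonoidHom.mem_ker, map_sub]
  have : Phi M (M.sm a r ⊗ₜ[ℤ] b) = Phi M (a ⊗ₜ[ℤ] M.sm' r b) := by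
    show thetaAA M (M.sm a r) b = thetaAA M a (M.sm' r b)
    ext y
    show M.theta (M.sm a r) b y = M.theta a (M.sm' r b) y
    simp [FnMod.theta, M.g_sm', M.sm_mul]
  rw [this, sub_self]

/-- The homomorphism `j : K_R(X) → End(X)` as an additive map to `X →+ X`. -/
def jH : M.K →+ (X →+ X) :=
  QuotientAddGroup.lift (BalRel R X X' M.sm M.sm') (Phi M)
    (fun z hz => Phi_ker M hz)

lemma jH_kTen (x : X) (φ : X') : jH M (M.kTen x φ) = thetaA M x φ := rfl

lemma kTen_add_left (x y : X) (φ : X') :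
    M.kTen (x + y) φ = M.kTen x φ + M.kTen y φ := by
  show QuotientAddGroup.mk _ = QuotientAddGroup.mk _ + QuotientAddGroup.mk _
  rw [TensorProduct.add_tmul]; rfl

lemma kTen_add_right (x : X) (φ ψ : X') :
    M.kTen x (φ + ψ) = M.kTen x φ + M.kTen x ψ := by
  show QuotientAddGroup.mk _ = QuotientAddGroup.mk _ + QuotientAddGroup.mk _
  rw [TensorProduct.tmul_add]; rfl

lemma kTen_zero_left (φ : X') : M.kTen 0 φ = 0 := by
  show QuotientAddGroup.mk _ = _
  rw [TensorProduct.zero_tmul]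
  rfl

/-- `kTen · φ` as an additive map. -/
def kTenL (φ : X') : X →+ M.K :=
  AddMonoidHom.mk' (fun x => M.kTen x φ) (fun x y => kTen_add_left M x y φ)

/-- `kTen x ·` as an additive map. -/
def kTenR (x : X) : X' →+ M.K :=
  AddMonoidHom.mk' (fun φ => M.kTen x φ) (fun φ ψ => kTen_add_right M x φ ψ)

lemma kTen_bal (x : X) (r : R) (φ : X') :
    M.kTen (M.sm x r) φ = M.kTen x (M.sm' r φ) := by
  show QuotientAddGroup.mk _ = QuotientAddGroup.mk _
  rw [QuotientAddGroup.eq]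
  have hmem : (M.sm x r ⊗ₜ[ℤ] φ - x ⊗ₜ[ℤ] M.sm' r φ) ∈
      {z : TensorProduct ℤ X X' | ∃ (a : X) (r : R) (b : X'),
        z = (M.sm a r) ⊗ₜ[ℤ] b - a ⊗ₜ[ℤ] (M.sm' r b)} := ⟨x, r, φ, rfl⟩
  have he : -(M.sm x r ⊗ₜ[ℤ] φ) + x ⊗ₜ[ℤ] M.sm' r φ =
      -(M.sm x r ⊗ₜ[ℤ] φ - x ⊗ₜ[ℤ] M.sm' r φ) := by abel
  rw [he]
  exact AddSubgroup.neg_mem _ (AddSubgroup.subset_closure hmem)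

/-- `sm · r` as an additive map. -/
def smA (r : R) : X →+ X :=
  AddMonoidHom.mk' (fun x => M.sm x r) (fun x y => M.sm_add_left x y r)

lemma exists_repr (a : M.K) :
    ∃ (n : ℕ) (x : Fin n → X) (φ : Fin n → X'), a = ∑ i, M.kTen (x i) (φ i) := by
  obtain ⟨t, rfl⟩ := QuotientAddGroup.mk_surjective (s := BalRel R X X' M.sm M.sm') a
  induction t using TensorProduct.induction_on with
  | zero => exact ⟨0, Fin.elim0, Fin.elim0, by simp; rfl⟩
  | tmul x φ => exact ⟨1, fun _ => x, fun _ => φ, by rw [Fin.sum_univ_one]; rfl⟩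
  | add t s ht hs =>
    obtain ⟨n, x, φ, h1⟩ := ht
    obtain ⟨m, y, ψ, h2⟩ := hs
    refine ⟨n + m, Fin.append x y, Fin.append φ ψ, ?_⟩
    have : (QuotientAddGroup.mk (t + s) : M.K) =
        QuotientAddGroup.mk t + QuotientAddGroup.mk s := rfl
    rw [this, h1, h2, Fin.sum_univ_add]
    simp [Fin.append_left, Fin.append_right]
    rfl

lemma jH_sum_apply {n : ℕ} (x : Fin n → X) (φ : Fin n → X') (y : X) :
    jH M (∑ i, M.kTen (x i) (φ i)) y = ∑ i, M.sm (x i) (M.g (φ i) y) := by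
  rw [map_sum, AddMonoidHom.finset_sum_apply]
  rfl

lemma adjointable_zero : M.Adjointable (fun _ => 0) := by
  refine ⟨⟨fun x y => by simp, fun x r => by rw [sm_zero]⟩,
    fun _ => 0, ⟨fun φ ψ => by simp, fun r φ => by rw [sm'_zero]⟩,
    fun φ x => by rw [g_zero_right, g_zero_left]⟩

lemma adjointable_add {f h : X → X} (hf : M.Adjointable f) (hh : M.Adjointable h) :
    M.Adjointable (fun y => f y + h y) := by
  obtain ⟨⟨fa, fr⟩, fs, ⟨fsa, fsr⟩, fadj⟩ := hf
  obtain ⟨⟨ha, hr⟩, hs, ⟨hsa, hsr⟩, hadj⟩ := hh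
  refine ⟨⟨fun x y => by
        show f (x + y) + h (x + y) = f x + h x + (f y + h y)
        rw [fa, ha]; abel,
      fun x r => by
        show f (M.sm x r) + h (M.sm x r) = M.sm (f x + h x) r
        rw [fr, hr, M.sm_add_left]⟩,
    fun ψ => fs ψ + hs ψ,
    ⟨fun φ ψ => by
        show fs (φ + ψ) + hs (φ + ψ) = fs φ + hs φ + (fs ψ + hs ψ)
        rw [fsa, hsa]; abel,
      fun r φ => by
        show fs (M.sm' r φ) + hs (M.sm' r φ) = M.sm' r (fs φ + hs φ)
        rw [fsr, hsr, M.sm'_add_left]⟩,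
    fun φ x => by
      show M.g φ (f x + h x) = M.g (fs φ + hs φ) x
      rw [M.g_add_right, M.g_add_left, fadj φ x, hadj φ x]⟩

lemma adjointable_theta (x : X) (φ : X') : M.Adjointable (M.theta x φ) := by
  refine ⟨⟨fun y z => by simp [FnMod.theta, M.g_add_right, M.sm_add_right],
      fun y r => by simp [FnMod.theta, M.g_sm, M.sm_mul]⟩,
    fun ψ => M.sm' (M.g ψ x) φ,
    ⟨fun ψ χ => by
        show M.sm' (M.g (ψ + χ) x) φ = M.sm' (M.g ψ x) φ + M.sm' (M.g χ x) φ
        rw [M.g_add_left, M.sm'_add_right],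
      fun r ψ => by
        show M.sm' (M.g (M.sm' r ψ) x) φ = M.sm' r (M.sm' (M.g ψ x) φ)
        rw [M.g_sm', M.sm'_mul]⟩,
    fun ψ y => by simp [FnMod.theta, M.g_sm, M.g_sm']⟩

lemma adjointable_sum {n : ℕ} (f : Fin n → X → X) (hf : ∀ i, M.Adjointable (f i)) :
    M.Adjointable (fun y => ∑ i, f i y) := by
  induction n with
  | zero => simpa using adjointable_zero M
  | succ n ih =>
    have := adjointable_add M (hf 0) (ih (fun i => f i.succ) (fun i => hf i.succ))
    convert this using 2 with y
    rw [Fin.sum_univ_succ]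

end Stmt4Aux

/-- If `X` satisfies (FS), the ring homomorphism
`j : K_R(X) → L_R(X)`, `x ⊗ φ ↦ θ_{x,φ}`, is injective and its image is a
two-sided ideal of the ring of adjointable operators. -/
theorem stmt4 {R X X' : Type} [NonUnitalRing R] [AddCommGroup X] [AddCommGroup X']
    (M : FnMod R X X') (hFS : M.FS) :
    ∃ j : M.K → (X → X),
      (∀ a b, j (a + b) = fun y => j a y + j b y) ∧
      (∀ (x : X) (φ : X'), j (M.kTen x φ) = M.theta x φ) ∧
      -- `j` is multiplicative (on generators, w.r.t. the product of `K_R(X)`)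
      (∀ (x y : X) (φ ψ : X'),
        j (M.kTen x φ) ∘ j (M.kTen y ψ) = j (M.kTen x (M.sm' (M.g φ y) ψ))) ∧
      -- `j` is injective
      Function.Injective j ∧
      -- the image of `j` lands in the adjointable operators and is a two-sided ideal there
      (∀ a, M.Adjointable (j a)) ∧
      (∀ f, M.Adjointable f → ∀ a,
        (∃ b, j b = f ∘ j a) ∧ ∃ b, j b = j a ∘ f) := by
  open Stmt4Aux in
  refine ⟨fun a => ⇑(jH M a), ?_, ?_, ?_, ?_, ?_, ?_⟩
  · intro a b
    funext y
    simp [map_add]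
  · intro x φ
    rfl
  · intro x y φ ψ
    funext w
    show M.theta x φ (M.theta y ψ w) = M.theta x (M.sm' (M.g φ y) ψ) w
    simp [FnMod.theta, M.g_sm, M.g_sm']
  · -- injectivity
    have key : ∀ c : M.K, (∀ y, jH M c y = 0) → c = 0 := by
      intro c hc
      obtain ⟨n, x, φ, rfl⟩ := exists_repr M c
      obtain ⟨m₁, y, ψ, m₂, z, χ, h1, h2⟩ := hFS n x φ
      calc ∑ i, M.kTen (x i) (φ i)
          = ∑ i, M.kTen (x i) (∑ j, M.sm' (M.g (φ i) (z j)) (χ j)) := by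
            exact Finset.sum_congr rfl fun i _ => by rw [h2 i]
        _ = ∑ i, ∑ j, M.kTen (x i) (M.sm' (M.g (φ i) (z j)) (χ j)) := by
            refine Finset.sum_congr rfl fun i _ => ?_
            exact map_sum (kTenR M (x i)) _ _
        _ = ∑ j, ∑ i, M.kTen (M.sm (x i) (M.g (φ i) (z j))) (χ j) := by
            rw [Finset.sum_comm]
            exact Finset.sum_congr rfl fun j _ => Finset.sum_congr rfl fun i _ =>
              (kTen_bal M _ _ _).symm
        _ = ∑ j, M.kTen (∑ i, M.sm (x i) (M.g (φ i) (z j))) (χ j) := by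
            refine Finset.sum_congr rfl fun j _ => ?_
            exact (map_sum (kTenL M (χ j)) _ _).symm
        _ = ∑ j, M.kTen 0 (χ j) := by
            refine Finset.sum_congr rfl fun j _ => ?_
            rw [← jH_sum_apply M x φ (z j), hc (z j)]
        _ = 0 := by simp [kTen_zero_left]
    intro a b hab
    have h0 : ∀ y, jH M (a - b) y = 0 := by
      intro y
      rw [map_sub, AddMonoidHom.sub_apply,
        show (jH M a) y = (jH M b) y from congrFun hab y, sub_self]
    have := key (a - b) h0
    linear_combination (norm := abel) this
  · -- adjointability
    intro a
    obtain ⟨n, x, φ, rfl⟩ := exists_repr M a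
    have e : (fun y => ∑ i, M.theta (x i) (φ i) y) =
        ⇑(jH M (∑ i, M.kTen (x i) (φ i))) :=
      funext fun y => (jH_sum_apply M x φ y).symm
    show M.Adjointable ⇑(jH M (∑ i, M.kTen (x i) (φ i)))
    exact e ▸ adjointable_sum M _ (fun i => adjointable_theta M _ _)
  · -- ideal property
    intro f hf a
    obtain ⟨⟨fa, fr⟩, fs, ⟨fsa, fsr⟩, fadj⟩ := hf
    obtain ⟨n, x, φ, rfl⟩ := exists_repr M a
    constructor
    · refine ⟨∑ i, M.kTen (f (x i)) (φ i), ?_⟩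
      funext y
      simp only [Function.comp_apply]
      rw [jH_sum_apply, jH_sum_apply,
        show f (∑ i, M.sm (x i) (M.g (φ i) y)) = ∑ i, f (M.sm (x i) (M.g (φ i) y))
          from map_sum (AddMonoidHom.mk' f fa) _ _]
      exact Finset.sum_congr rfl fun i _ => (fr _ _).symm
    · refine ⟨∑ i, M.kTen (x i) (fs (φ i)), ?_⟩
      funext y
      simp only [Function.comp_apply]
      rw [jH_sum_apply, jH_sum_apply]
      exact Finset.sum_congr rfl fun i _ => by rw [fadj]

end
end

section
/- If X satisfies condition (FS) and (U, V) : X → Y is a functional homomorphism, then the induced ring homomorphism U ⊗ V : K_R(X) → K_R(Y) is injective. -/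
noncomputable section

open scoped TensorProduct

section MyAux
open scoped TensorProduct
variable {R X X' : Type} [NonUnitalRing R] [AddCommGroup X] [AddCommGroup X']
variable (M : FnMod R X X')

lemma my_g_zero_left (x : X) : M.g 0 x = 0 := by
  have := M.g_add_left 0 0 x; simpa using this.symm

lemma my_g_zero_right (φ : X') : M.g φ 0 = 0 := by
  have := M.g_add_right φ 0 0; simpa using this.symm

lemma my_sm_zero_left (r : R) : M.sm 0 r = 0 := by
  have := M.sm_add_left 0 0 r; simpa using this.symm

lemma my_sm'_zero_right (r : R) : M.sm' r 0 = 0 := by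
  have := M.sm'_add_left r 0 0; simpa using this.symm

lemma my_sm'_zero_left (φ : X') : M.sm' 0 φ = 0 := by
  have := M.sm'_add_right 0 0 φ; simpa using this.symm

lemma kTen_add_left (x y : X) (φ : X') : M.kTen (x + y) φ = M.kTen x φ + M.kTen y φ := by
  show QuotientAddGroup.mk _ = QuotientAddGroup.mk _ + QuotientAddGroup.mk _
  rw [TensorProduct.add_tmul]; exact QuotientAddGroup.mk_add (N := BalRel R X X' M.sm M.sm') _ _

lemma kTen_add_right (x : X) (φ ψ : X') : M.kTen x (φ + ψ) = M.kTen x φ + M.kTen x ψ := by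
  show QuotientAddGroup.mk _ = QuotientAddGroup.mk _ + QuotientAddGroup.mk _
  rw [TensorProduct.tmul_add]; exact QuotientAddGroup.mk_add (N := BalRel R X X' M.sm M.sm') _ _

/-- `kTen · φ` as an additive hom. -/
def kTenL (φ : X') : X →+ M.K := AddMonoidHom.mk' (fun x => M.kTen x φ)
  (fun x y => kTen_add_left M x y φ)

/-- `kTen x ·` as an additive hom. -/
def kTenR (x : X) : X' →+ M.K := AddMonoidHom.mk' (fun φ => M.kTen x φ)
  (fun φ ψ => kTen_add_right M x φ ψ)

lemma kTen_bal (x : X) (r : R) (φ : X') :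
    M.kTen (M.sm x r) φ = M.kTen x (M.sm' r φ) := by
  show (QuotientAddGroup.mk _ : M.K) = QuotientAddGroup.mk _
  rw [QuotientAddGroup.eq]
  have h : (M.sm x r) ⊗ₜ[ℤ] φ - x ⊗ₜ[ℤ] (M.sm' r φ) ∈ BalRel R X X' M.sm M.sm' :=
    AddSubgroup.subset_closure ⟨x, r, φ, rfl⟩
  simpa [neg_sub, sub_eq_neg_add] using neg_mem h

lemma K_repr (t : M.K) : ∃ (n : ℕ) (x : Fin n → X) (φ : Fin n → X'),
    t = ∑ i, M.kTen (x i) (φ i) := by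
  obtain ⟨s, rfl⟩ := QuotientAddGroup.mk_surjective t
  induction s using TensorProduct.induction_on with
  | zero => exact ⟨0, ![], ![], by simp; rfl⟩
  | tmul a b => exact ⟨1, ![a], ![b], by
      simp [FnMod.kTen, TensB.mk]
      exact (Finset.sum_singleton (f := fun _ : Fin 1 => (QuotientAddGroup.mk (a ⊗ₜ[ℤ] b) : M.K)) (a := 0)).symm⟩
  | add a b ha hb =>
      obtain ⟨n, x, φ, hx⟩ := ha
      obtain ⟨m, y, ψ, hy⟩ := hb
      refine ⟨n + m, Fin.append x y, Fin.append φ ψ, ?_⟩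
      rw [Fin.sum_univ_add]
      simp only [Fin.append_left, Fin.append_right]
      rw [← hx, ← hy]; rfl

/-- The action of `TensorProduct ℤ Y Y'` on a vector `w : Y`, sending
`a ⊗ b` to `a · g(b ⊗ w)`. -/
def actBase {Y Y' : Type} [AddCommGroup Y] [AddCommGroup Y'] (N : FnMod R Y Y') (w : Y) :
    TensorProduct ℤ Y Y' →+ Y :=
  TensorProduct.liftAddHom
    (AddMonoidHom.mk' (fun a => AddMonoidHom.mk' (fun b => N.sm a (N.g b w))
        (fun b c => by show N.sm a (N.g (b + c) w) = _; rw [N.g_add_left, N.sm_add_right]))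
      (fun a a' => by ext b; exact N.sm_add_left a a' (N.g b w)))
    (fun r m n => by simp [map_zsmul])

@[simp] lemma actBase_tmul {Y Y' : Type} [AddCommGroup Y] [AddCommGroup Y']
    (N : FnMod R Y Y') (w : Y) (a : Y) (b : Y') :
    actBase N w (a ⊗ₜ[ℤ] b) = N.sm a (N.g b w) := rfl

lemma actBase_bal {Y Y' : Type} [AddCommGroup Y] [AddCommGroup Y']
    (N : FnMod R Y Y') (w : Y) :
    BalRel R Y Y' N.sm N.sm' ≤ (actBase N w).ker := by
  rw [BalRel, AddSubgroup.closure_le]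
  rintro z ⟨a, r, b, rfl⟩
  simp only [SetLike.mem_coe, AddMonoidHom.mem_ker, map_sub, actBase_tmul]
  rw [N.g_sm', ← N.sm_mul, sub_self]

/-- The action of `K_R(Y)` on `w : Y`. -/
def actHom {Y Y' : Type} [AddCommGroup Y] [AddCommGroup Y'] (N : FnMod R Y Y') (w : Y) :
    N.K →+ Y :=
  QuotientAddGroup.lift _ (actBase N w) (actBase_bal N w)

@[simp] lemma actHom_kTen {Y Y' : Type} [AddCommGroup Y] [AddCommGroup Y']
    (N : FnMod R Y Y') (w : Y) (a : Y) (b : Y') :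
    actHom N w (N.kTen a b) = N.sm a (N.g b w) := rfl


lemma kTen_zero_right (x : X) : M.kTen x 0 = 0 := (kTenR M x).map_zero

/-- Right multiplication `sm'` by a fixed scalar, as an additive hom. -/
def sm'Hom (r : R) : X' →+ X' := AddMonoidHom.mk' (M.sm' r) (M.sm'_add_left r)

end MyAux

/-- A functional homomorphism `(U, V) : (X, X', g) → (Y, Y', h)` between right
functional `R`-modules: `R`-module maps with `h(V φ ⊗ U x) = g(φ ⊗ x)`. -/
structure FnHom {R X X' Y Y' : Type} [NonUnitalRing R] [AddCommGroup X] [AddCommGroup X']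
    [AddCommGroup Y] [AddCommGroup Y'] (M : FnMod R X X') (N : FnMod R Y Y') where
  U : X → Y
  V : X' → Y'
  U_add : ∀ x y, U (x + y) = U x + U y
  U_sm : ∀ x r, U (M.sm x r) = N.sm (U x) r
  V_add : ∀ φ ψ, V (φ + ψ) = V φ + V ψ
  V_sm : ∀ r φ, V (M.sm' r φ) = N.sm' r (V φ)
  pair : ∀ φ x, N.g (V φ) (U x) = M.g φ x

/-- If `X` satisfies condition (FS) and `(U,V) : X → Y` is a
functional homomorphism, then the induced homomorphism
`U ⊗ V : K_R(X) → K_R(Y)` is injective. -/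
theorem stmt10 {R X X' Y Y' : Type} [NonUnitalRing R] [AddCommGroup X] [AddCommGroup X']
    [AddCommGroup Y] [AddCommGroup Y'] (M : FnMod R X X') (N : FnMod R Y Y')
    (F : FnHom M N) (hFS : M.FS) :
    ∀ Φ : M.K → N.K,
      (∀ a b, Φ (a + b) = Φ a + Φ b) →
      (∀ x φ, Φ (M.kTen x φ) = N.kTen (F.U x) (F.V φ)) →
      Function.Injective Φ := by
  intro Φ hadd hten
  have h0 : Φ 0 = 0 := by
    have h := hadd 0 0
    rw [add_zero] at h
    exact (left_eq_add.mp h)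
  have key : ∀ t : M.K, Φ t = 0 → t = 0 := by
    intro t ht
    obtain ⟨n, x, φ, rfl⟩ := K_repr M t
    obtain ⟨m₁, y, ψ, m₂, z, χ, h1, h2⟩ := hFS n x φ
    have hsum : (∑ i, N.kTen (F.U (x i)) (F.V (φ i))) = 0 := by
      calc ∑ i, N.kTen (F.U (x i)) (F.V (φ i))
          = ∑ i, Φ (M.kTen (x i) (φ i)) := by
            exact Finset.sum_congr rfl fun i _ => (hten (x i) (φ i)).symm
        _ = (AddMonoidHom.mk' Φ hadd) (∑ i, M.kTen (x i) (φ i)) :=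
            (map_sum (AddMonoidHom.mk' Φ hadd) _ _).symm
        _ = 0 := ht
    have hact : ∀ w : Y, ∑ i, N.sm (F.U (x i)) (N.g (F.V (φ i)) w) = 0 := by
      intro w
      have h := congrArg (actHom N w) hsum
      rw [map_sum, map_zero] at h
      simpa only [actHom_kTen] using h
    calc ∑ i, M.kTen (x i) (φ i)
        = ∑ i, ∑ j, M.kTen (M.sm (y j) (M.g (ψ j) (x i))) (φ i) := by
          refine Finset.sum_congr rfl fun i _ => ?_
          conv_lhs => rw [← h1 i]
          exact map_sum (kTenL M (φ i)) _ _
      _ = ∑ i, ∑ j, ∑ k, M.kTen (y j)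
            (M.sm' (N.g (F.V (ψ j)) (N.sm (F.U (x i)) (N.g (F.V (φ i)) (F.U (z k))))) (χ k)) := by
          refine Finset.sum_congr rfl fun i _ => Finset.sum_congr rfl fun j _ => ?_
          rw [kTen_bal]
          conv_lhs => rw [← h2 i]
          have e1 : M.sm' (M.g (ψ j) (x i)) (∑ k, M.sm' (M.g (φ i) (z k)) (χ k))
              = ∑ k, M.sm' (M.g (ψ j) (x i)) (M.sm' (M.g (φ i) (z k)) (χ k)) :=
            map_sum (sm'Hom M (M.g (ψ j) (x i))) _ _
          rw [e1]
          have e2 : M.kTen (y j) (∑ k, M.sm' (M.g (ψ j) (x i)) (M.sm' (M.g (φ i) (z k)) (χ k)))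
              = ∑ k, M.kTen (y j) (M.sm' (M.g (ψ j) (x i)) (M.sm' (M.g (φ i) (z k)) (χ k))) :=
            map_sum (kTenR M (y j)) _ _
          rw [e2]
          refine Finset.sum_congr rfl fun k _ => ?_
          rw [← M.sm'_mul, ← M.g_sm, ← F.pair, F.U_sm, ← F.pair (φ i) (z k)]
      _ = ∑ j, ∑ k, M.kTen (y j)
            (M.sm' (N.g (F.V (ψ j)) (∑ i, N.sm (F.U (x i)) (N.g (F.V (φ i)) (F.U (z k))))) (χ k)) := by
          rw [Finset.sum_comm]
          refine Finset.sum_congr rfl fun j _ => ?_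
          rw [Finset.sum_comm]
          refine Finset.sum_congr rfl fun k _ => ?_
          set G : Y →+ M.K :=
            ((kTenR M (y j)).comp (AddMonoidHom.mk' (fun r => M.sm' r (χ k))
                (fun r s => M.sm'_add_right r s (χ k)))).comp
              (AddMonoidHom.mk' (fun v => N.g (F.V (ψ j)) v)
                (fun v w => N.g_add_right (F.V (ψ j)) v w)) with hG
          exact (map_sum G _ _).symm
      _ = 0 := by
          refine Finset.sum_eq_zero fun j _ => Finset.sum_eq_zero fun k _ => ?_
          rw [hact (F.U (z k)), my_g_zero_right, my_sm'_zero_left, kTen_zero_right]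
  intro a b hab
  have hneg : Φ (-b) = -Φ b := by
    have h1 := hadd b (-b)
    rw [add_neg_cancel, h0] at h1
    exact eq_neg_of_add_eq_zero_right h1.symm
  have hz : Φ (a - b) = 0 := by
    rw [sub_eq_add_neg, hadd, hneg, hab, add_neg_cancel]
  exact sub_eq_zero.mp (key _ hz)


end
end

section
/- Let M be a finitely generated projective right R-module over a ring R with local units. Then there exist n, an idempotent e ∈ R, and a right R-module N such that M ⊕ N ≅ (eR)ⁿ as right R-modules, and consequently there is a functional homomorphism from the functional module (M, Hom_R(M,R), ev) to Rⁿ. -/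
def HasLocalUnits (R : Type) [NonUnitalRing R] : Prop :=
  ∀ s : Finset R, ∃ e : R, e * e = e ∧ ∀ r ∈ s, e * r = r ∧ r * e = r

/-- A right module structure on an abelian group over a possibly non-unital ring. -/
structure RModS (R M : Type) [NonUnitalRing R] [AddCommGroup M] where
  sm : M → R → M
  sm_add_left : ∀ m n r, sm (m + n) r = sm m r + sm n r
  sm_add_right : ∀ m r s, sm m (r + s) = sm m r + sm m s
  sm_mul : ∀ m r s, sm m (r * s) = sm (sm m r) s

/-- A unitary (non-degenerate) module: `M·R = M`. -/
def RModS.Unitary {R M : Type} [NonUnitalRing R] [AddCommGroup M] (S : RModS R M) : Prop :=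
  ∀ m : M, ∃ (n : ℕ) (a : Fin n → M) (r : Fin n → R), m = ∑ i, S.sm (a i) (r i)

/-- Homomorphism of right `R`-modules. -/
def RModS.Lin {R M N : Type} [NonUnitalRing R] [AddCommGroup M] [AddCommGroup N]
    (S : RModS R M) (T : RModS R N) (f : M → N) : Prop :=
  (∀ m n, f (m + n) = f m + f n) ∧ ∀ m r, f (S.sm m r) = T.sm (f m) r

/-- Finitely generated module. -/
def RModS.FG {R M : Type} [NonUnitalRing R] [AddCommGroup M] (S : RModS R M) : Prop :=
  ∃ (n : ℕ) (gen : Fin n → M), ∀ m : M, ∃ c : Fin n → R, m = ∑ i, S.sm (gen i) (c i)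

/-- Projective module: lifting property in the category of unitary right `R`-modules. -/
def RModS.Projective {R M : Type} [NonUnitalRing R] [AddCommGroup M] (S : RModS R M) : Prop :=
  ∀ (P Q : Type) (iP : AddCommGroup P) (iQ : AddCommGroup Q)
    (SP : @RModS R P _ iP) (SQ : @RModS R Q _ iQ),
    SP.Unitary → SQ.Unitary →
    ∀ p : P → Q, @RModS.Lin R P Q _ iP iQ SP SQ p → Function.Surjective p →
    ∀ f : M → Q, @RModS.Lin R M Q _ _ iQ S SQ f →
    ∃ h : M → P, @RModS.Lin R M P _ _ iP S SP h ∧ p ∘ h = f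

/-- The dual module `M* = Hom_R(M, R)`. -/
def RModS.Dual {R M : Type} [NonUnitalRing R] [AddCommGroup M] (S : RModS R M) : Type :=
  {φ : M → R // (∀ m n, φ (m + n) = φ m + φ n) ∧ ∀ m r, φ (S.sm m r) = φ m * r}


section Aux
variable {R M : Type} [NonUnitalRing R] [AddCommGroup M] (S : RModS R M)

/-- Right multiplication by `r` as an additive hom. -/
def RModS.smHom (r : R) : M →+ M :=
  AddMonoidHom.mk' (fun m => S.sm m r) (fun a b => S.sm_add_left a b r)

lemma RModS.zero_sm (r : R) : S.sm 0 r = 0 := map_zero (S.smHom r)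

lemma RModS.sum_sm {ι : Type} (t : Finset ι) (f : ι → M) (r : R) :
    S.sm (∑ i ∈ t, f i) r = ∑ i ∈ t, S.sm (f i) r :=
  map_sum (S.smHom r) f t

end Aux

/-- Over a ring with local units, a finitely generated projective
unitary right module `M` is a direct summand of some `(eR)ⁿ` (`e` idempotent), and
consequently the functional module `(M, M*, ev)` admits a functional homomorphism
to `Rⁿ`. -/
theorem stmt11 (R M : Type) [NonUnitalRing R] [AddCommGroup M] (S : RModS R M)
    (hR : HasLocalUnits R) (hU : S.Unitary) (hFG : S.FG) (hP : S.Projective) :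
    (∃ (n : ℕ) (e : R), e * e = e ∧
      ∃ (N : Type) (iN : AddCommGroup N) (SN : @RModS R N _ iN)
        (Φ : M × N → (Fin n → R)),
        -- `Φ` is an isomorphism of right `R`-modules from `M ⊕ N` onto `(eR)ⁿ`
        (∀ p i, e * Φ p i = Φ p i) ∧
        (∀ p q, Φ (p + q) = Φ p + Φ q) ∧
        (∀ (m : M) (x : N) (r : R),
          Φ (S.sm m r, SN.sm x r) = fun i => Φ (m, x) i * r) ∧
        Function.Injective Φ ∧
        (∀ x : Fin n → R, (∀ i, e * x i = x i) → ∃ p, Φ p = x)) ∧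
    -- consequently: a functional homomorphism `(M, M*, ev) → Rⁿ`
    (∃ (n : ℕ) (U : M → (Fin n → R)) (V : S.Dual → (Fin n → R)),
      (∀ m m', U (m + m') = U m + U m') ∧
      (∀ m r, U (S.sm m r) = fun i => U m i * r) ∧
      (∀ φ ψ χ : S.Dual, (∀ m, χ.1 m = φ.1 m + ψ.1 m) → V χ = V φ + V ψ) ∧
      (∀ (r : R) (φ ψ : S.Dual), (∀ m, ψ.1 m = r * φ.1 m) → V ψ = fun i => r * V φ i) ∧
      (∀ (φ : S.Dual) (m : M), ∑ i, V φ i * U m i = φ.1 m)) := by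
  classical
  obtain ⟨n, g, hg⟩ := hFG
  choose k a r hgr using fun i => hU (g i)
  obtain ⟨e, he, hunit⟩ :=
    hR (Finset.univ.biUnion fun i => Finset.image (r i) Finset.univ)
  have hre : ∀ i j, r i j * e = r i j := fun i j =>
    (hunit _ (Finset.mem_biUnion.2 ⟨i, Finset.mem_univ _,
      Finset.mem_image_of_mem _ (Finset.mem_univ _)⟩)).2
  have hge : ∀ i, S.sm (g i) e = g i := by
    intro i
    calc S.sm (g i) e = ∑ j, S.sm (S.sm (a i j) (r i j)) e := by
          rw [hgr i, S.sum_sm]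
      _ = ∑ j, S.sm (a i j) (r i j) :=
          Finset.sum_congr rfl fun j _ => by rw [← S.sm_mul, hre]
      _ = g i := (hgr i).symm
  set π : (Fin n → R) → M := fun x => ∑ i, S.sm (g i) (x i) with hπdef
  have πadd : ∀ x y, π (x + y) = π x + π y := by
    intro x y
    rw [hπdef, ← Finset.sum_add_distrib]
    exact Finset.sum_congr rfl fun i _ => S.sm_add_right _ _ _
  let πH : (Fin n → R) →+ M := AddMonoidHom.mk' π πadd
  have πsm : ∀ (x : Fin n → R) (r' : R), π (fun i => x i * r') = S.sm (π x) r' := by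
    intro x r'
    rw [hπdef, S.sum_sm]
    exact Finset.sum_congr rfl fun i _ => by rw [← S.sm_mul]
  -- the module (eR)ⁿ
  let K : AddSubgroup (Fin n → R) :=
    { carrier := {x | ∀ i, e * x i = x i}
      add_mem' := fun hx hy i => by simp only [Pi.add_apply, mul_add, hx i, hy i]
      zero_mem' := fun i => by simp
      neg_mem' := fun hx i => by simp only [Pi.neg_apply, mul_neg, hx i] }
  let SP : RModS R ↥K :=
    { sm := fun x r' => ⟨fun i => x.1 i * r', fun i => by rw [← mul_assoc, x.2 i]⟩
      sm_add_left := fun x y r' => Subtype.ext (funext fun i => add_mul _ _ _)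
      sm_add_right := fun x r' s => Subtype.ext (funext fun i => mul_add _ _ _)
      sm_mul := fun x r' s => Subtype.ext (funext fun i => (mul_assoc _ _ _).symm) }
  have hPU : SP.Unitary := by
    intro x
    obtain ⟨f, hf, hfr⟩ := hR (Finset.image x.1 Finset.univ)
    refine ⟨1, fun _ => x, fun _ => f, ?_⟩
    rw [Fin.sum_univ_one]
    exact Subtype.ext (funext fun i =>
      ((hfr _ (Finset.mem_image_of_mem _ (Finset.mem_univ i))).2).symm)
  let pP : ↥K → M := fun x => π x.1
  have hpPlin : RModS.Lin SP S pP := by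
    constructor
    · intro x y; exact πadd x.1 y.1
    · intro x r'; exact πsm x.1 r'
  have hpPsurj : Function.Surjective pP := by
    intro m
    obtain ⟨c, hc⟩ := hg m
    refine ⟨⟨fun i => e * c i, fun i => by rw [← mul_assoc, he]⟩, ?_⟩
    show (∑ i, S.sm (g i) (e * c i)) = m
    rw [hc]
    exact Finset.sum_congr rfl fun i _ => by rw [S.sm_mul, hge]
  obtain ⟨h, hhlin, hph⟩ := hP (↥K) M inferInstance inferInstance SP S hPU hU
    pP hpPlin hpPsurj id ⟨fun _ _ => rfl, fun _ _ => rfl⟩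
  have hπh : ∀ m, π (h m).1 = m := fun m => congrFun hph m
  constructor
  · -- first part
    refine ⟨n, e, he, ?_⟩
    -- the complement N = ker π ∩ (eR)ⁿ
    let KN : AddSubgroup (Fin n → R) :=
      { carrier := {x | (∀ i, e * x i = x i) ∧ π x = 0}
        add_mem' := fun hx hy =>
          ⟨fun i => by simp only [Pi.add_apply, mul_add, hx.1 i, hy.1 i],
           by rw [πadd, hx.2, hy.2, add_zero]⟩
        zero_mem' := ⟨fun i => by simp, map_zero πH⟩
        neg_mem' := fun hx =>
          ⟨fun i => by simp only [Pi.neg_apply, mul_neg, hx.1 i],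
           by rw [show π (-_) = -π _ from map_neg πH _, hx.2, neg_zero]⟩ }
    let SN : RModS R ↥KN :=
      { sm := fun x r' => ⟨fun i => x.1 i * r',
          ⟨fun i => by rw [← mul_assoc, x.2.1 i],
           by rw [πsm, x.2.2, S.zero_sm]⟩⟩
        sm_add_left := fun x y r' => Subtype.ext (funext fun i => add_mul _ _ _)
        sm_add_right := fun x r' s => Subtype.ext (funext fun i => mul_add _ _ _)
        sm_mul := fun x r' s => Subtype.ext (funext fun i => (mul_assoc _ _ _).symm) }
    refine ⟨↥KN, inferInstance, SN, fun p => (h p.1).1 + p.2.1, ?_, ?_, ?_, ?_, ?_⟩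
    · intro p i
      simp only [Pi.add_apply, mul_add, (h p.1).2 i, p.2.2.1 i]
    · intro p q
      have : h (p.1 + q.1) = h p.1 + h q.1 := hhlin.1 p.1 q.1
      show (h (p.1 + q.1)).1 + (p.2.1 + q.2.1) = _
      rw [this]
      show (h p.1).1 + (h q.1).1 + (p.2.1 + q.2.1) = _
      funext i
      simp only [Pi.add_apply]
      abel
    · intro m x r'
      have : h (S.sm m r') = SP.sm (h m) r' := hhlin.2 m r'
      show (h (S.sm m r')).1 + _ = _
      rw [this]
      exact funext fun i => (add_mul _ _ _).symm
    · intro p q hpq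
      have hm : p.1 = q.1 := by
        have := congrArg π hpq
        rw [πadd, πadd, hπh, hπh, p.2.2.2, q.2.2.2, add_zero, add_zero] at this
        exact this
      have hx : p.2 = q.2 := by
        apply Subtype.ext
        have h2 : ((h p.1 : Fin n → R) + p.2.1) = ((h q.1 : Fin n → R) + q.2.1) := hpq
        rw [hm] at h2
        exact add_left_cancel h2
      exact Prod.ext hm hx
    · intro x hx
      refine ⟨⟨π x, ⟨x - (h (π x)).1, ⟨?_, ?_⟩⟩⟩, ?_⟩
      · intro i
        simp only [Pi.sub_apply, mul_sub, hx i, (h (π x)).2 i]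
      · rw [show π (x - _) = π x - π _ from map_sub πH _ _, hπh, sub_self]
      · show (h (π x)).1 + (x - (h (π x)).1) = x
        abel
  · -- second part: functional homomorphism
    refine ⟨n, fun m => (h m).1, fun φ i => φ.1 (g i), ?_, ?_, ?_, ?_, ?_⟩
    · intro m m'
      show (h (m + m') : Fin n → R) = (h m : Fin n → R) + (h m' : Fin n → R)
      rw [hhlin.1 m m']; rfl
    · intro m r'
      show (h (S.sm m r') : Fin n → R) = fun i => (h m : Fin n → R) i * r'
      rw [hhlin.2 m r']
    · intro φ ψ χ hχ
      exact funext fun i => hχ (g i)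
    · intro r' φ ψ hψ
      exact funext fun i => hψ (g i)
    · intro φ m
      let φH : M →+ R := AddMonoidHom.mk' φ.1 φ.2.1
      calc (∑ i, φ.1 (g i) * (h m).1 i)
          = ∑ i, φ.1 (S.sm (g i) ((h m).1 i)) :=
            Finset.sum_congr rfl fun i _ => (φ.2.2 _ _).symm
        _ = φ.1 (∑ i, S.sm (g i) ((h m).1 i)) := (map_sum φH _ _).symm
        _ = φ.1 (π (h m).1) := rfl
        _ = φ.1 m := by rw [hπh m]
end
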